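/- Let h ≠ 0, a₁² = 1, a₀ ≠ 0, and consider the helicoidal surface with spacelike axis X(s,t) = (ht, (a₁ s + a₀) sinh t + s cosh t, (a₁ s + a₀) cosh t + s sinh t) in Minkowski 3-space. Then EG - F² = -a₀² < 0 (the surface is timelike), and both the mean curvature H and the Gauss curvature K vanish identically. -/

import Mathlib

noncomputable section

lemma dprod3 {f g k : ℝ → ℝ} {f' g' k' : ℝ} {x : ℝ} (hf : HasDerivAt f f' x)
    (hg : HasDerivAt g g' x) (hk : HasDerivAt k k' x) :
    deriv (fun u => ((f u, g u, k u) : ℝ × ℝ × ℝ)) x = (f', g', k') :=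
  (hf.prodMk (hg.prodMk hk)).deriv

/-- Lorentzian inner product on Minkowski 3-space. -/
def mink (u v : ℝ × ℝ × ℝ) : ℝ := u.1 * v.1 + u.2.1 * v.2.1 - u.2.2 * v.2.2

/-- Determinant of the 3×3 matrix with columns `u,v,w`. -/
def det3 (u v w : ℝ × ℝ × ℝ) : ℝ :=
  u.1 * (v.2.1 * w.2.2 - v.2.2 * w.2.1)
    - u.2.1 * (v.1 * w.2.2 - v.2.2 * w.1)
    + u.2.2 * (v.1 * w.2.1 - v.2.1 * w.1)

/-- Partial derivative with respect to the first parameter. -/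
def pd1 (X : ℝ → ℝ → ℝ × ℝ × ℝ) : ℝ → ℝ → ℝ × ℝ × ℝ := fun s t => deriv (fun u => X u t) s

/-- Partial derivative with respect to the second parameter. -/
def pd2 (X : ℝ → ℝ → ℝ × ℝ × ℝ) : ℝ → ℝ → ℝ × ℝ × ℝ := fun s t => deriv (fun u => X s u) t

def Ecoef (X : ℝ → ℝ → ℝ × ℝ × ℝ) (s t : ℝ) : ℝ := mink (pd1 X s t) (pd1 X s t)
def Fcoef (X : ℝ → ℝ → ℝ × ℝ × ℝ) (s t : ℝ) : ℝ := mink (pd1 X s t) (pd2 X s t)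
def Gcoef (X : ℝ → ℝ → ℝ × ℝ × ℝ) (s t : ℝ) : ℝ := mink (pd2 X s t) (pd2 X s t)

/-- `W = EG - F²`. -/
def Wform (X : ℝ → ℝ → ℝ × ℝ × ℝ) (s t : ℝ) : ℝ :=
  Ecoef X s t * Gcoef X s t - Fcoef X s t ^ 2

/-- Numerator `H₁ = G·det(Xs,Xt,Xss) - 2F·det(Xs,Xt,Xst) + E·det(Xs,Xt,Xtt)`. -/
def H1 (X : ℝ → ℝ → ℝ × ℝ × ℝ) (s t : ℝ) : ℝ :=
  Gcoef X s t * det3 (pd1 X s t) (pd2 X s t) (pd1 (pd1 X) s t)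
    - 2 * Fcoef X s t * det3 (pd1 X s t) (pd2 X s t) (pd2 (pd1 X) s t)
    + Ecoef X s t * det3 (pd1 X s t) (pd2 X s t) (pd2 (pd2 X) s t)

/-- `K₁ = det(Xs,Xt,Xss)·det(Xs,Xt,Xtt) - det(Xs,Xt,Xst)²`. -/
def K1 (X : ℝ → ℝ → ℝ × ℝ × ℝ) (s t : ℝ) : ℝ :=
  det3 (pd1 X s t) (pd2 X s t) (pd1 (pd1 X) s t)
      * det3 (pd1 X s t) (pd2 X s t) (pd2 (pd2 X) s t)
    - det3 (pd1 X s t) (pd2 X s t) (pd2 (pd1 X) s t) ^ 2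

/-- Mean curvature of a timelike surface (`ε = 1`, `W < 0`). -/
def Hmean (X : ℝ → ℝ → ℝ × ℝ × ℝ) (s t : ℝ) : ℝ :=
  -(1 / 2) * H1 X s t / (-(Wform X s t)) ^ ((3 : ℝ) / 2)

/-- Gauss curvature `K = -K₁/W²`. -/
def Kcurv (X : ℝ → ℝ → ℝ × ℝ × ℝ) (s t : ℝ) : ℝ :=
  -(K1 X s t) / (Wform X s t) ^ 2

/-- The helicoidal surface with spacelike axis
`X(s,t) = (ht, (a₁s+a₀) sinh t + s cosh t, (a₁s+a₀) cosh t + s sinh t)`, `a₁² = 1`,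
`a₀ ≠ 0`, is timelike with `EG - F² = -a₀²`, and `H = 0`, `K = 0` identically. -/
theorem stmt_5 (h a₀ a₁ : ℝ) (hh : h ≠ 0) (ha1 : a₁ ^ 2 = 1) (ha0 : a₀ ≠ 0) :
    let X : ℝ → ℝ → ℝ × ℝ × ℝ := fun s t =>
      (h * t, (a₁ * s + a₀) * Real.sinh t + s * Real.cosh t,
        (a₁ * s + a₀) * Real.cosh t + s * Real.sinh t)
    ∀ s t : ℝ, Wform X s t = -a₀ ^ 2 ∧ Wform X s t < 0 ∧
      Hmean X s t = 0 ∧ Kcurv X s t = 0 := by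
  intro X
  have hpd1 : pd1 X = fun s t => ((0, a₁ * Real.sinh t + Real.cosh t,
      a₁ * Real.cosh t + Real.sinh t) : ℝ × ℝ × ℝ) := by
    funext s t
    show deriv (fun u => X u t) s = _
    refine dprod3 (hasDerivAt_const s _) ?_ ?_
    · have := ((((hasDerivAt_id s).const_mul a₁).add_const a₀).mul_const (Real.sinh t)).add
        ((hasDerivAt_id s).mul_const (Real.cosh t))
      convert this using 1 <;> first | rfl | ring
    · have := ((((hasDerivAt_id s).const_mul a₁).add_const a₀).mul_const (Real.cosh t)).add
        ((hasDerivAt_id s).mul_const (Real.sinh t))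
      convert this using 1 <;> first | rfl | ring
  have hpd2 : pd2 X = fun s t => ((h, (a₁ * s + a₀) * Real.cosh t + s * Real.sinh t,
      (a₁ * s + a₀) * Real.sinh t + s * Real.cosh t) : ℝ × ℝ × ℝ) := by
    funext s t
    show deriv (fun u => X s u) t = _
    refine dprod3 ?_ ?_ ?_
    · simpa using (hasDerivAt_id t).const_mul h
    · have := ((Real.hasDerivAt_sinh t).const_mul (a₁ * s + a₀)).add
        ((Real.hasDerivAt_cosh t).const_mul s)
      convert this using 1 <;> first | rfl
    · have := ((Real.hasDerivAt_cosh t).const_mul (a₁ * s + a₀)).add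
        ((Real.hasDerivAt_sinh t).const_mul s)
      convert this using 1 <;> first | rfl
  have hpd11 : ∀ s t : ℝ, pd1 (pd1 X) s t = (0, 0, 0) := by
    intro s t
    rw [hpd1]
    show deriv _ s = _
    exact dprod3 (hasDerivAt_const s _) (hasDerivAt_const s _) (hasDerivAt_const s _)
  have hpd12 : ∀ s t : ℝ, pd2 (pd1 X) s t = (0, a₁ * Real.cosh t + Real.sinh t,
      a₁ * Real.sinh t + Real.cosh t) := by
    intro s t
    rw [hpd1]
    show deriv _ t = _
    refine dprod3 (hasDerivAt_const t _) ?_ ?_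
    · exact ((Real.hasDerivAt_sinh t).const_mul a₁).add (Real.hasDerivAt_cosh t)
    · exact ((Real.hasDerivAt_cosh t).const_mul a₁).add (Real.hasDerivAt_sinh t)
  have hpd22 : ∀ s t : ℝ, pd2 (pd2 X) s t = (0, (a₁ * s + a₀) * Real.sinh t + s * Real.cosh t,
      (a₁ * s + a₀) * Real.cosh t + s * Real.sinh t) := by
    intro s t
    rw [hpd2]
    show deriv _ t = _
    refine dprod3 (hasDerivAt_const t _) ?_ ?_
    · exact ((Real.hasDerivAt_cosh t).const_mul (a₁ * s + a₀)).add
        ((Real.hasDerivAt_sinh t).const_mul s)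
    · exact ((Real.hasDerivAt_sinh t).const_mul (a₁ * s + a₀)).add
        ((Real.hasDerivAt_cosh t).const_mul s)
  intro s t
  have hcs : Real.cosh t ^ 2 - Real.sinh t ^ 2 = 1 := Real.cosh_sq_sub_sinh_sq t
  have hE : Ecoef X s t = 0 := by
    simp only [Ecoef, mink, hpd1]
    nlinarith [hcs, ha1]
  have hF : Fcoef X s t = a₀ := by
    simp only [Fcoef, mink, hpd1, hpd2]
    linear_combination a₀ * hcs
  have hG : Gcoef X s t = h ^ 2 + 2 * a₁ * a₀ * s + a₀ ^ 2 := by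
    simp only [Gcoef, mink, hpd2]
    linear_combination ((a₁ * s + a₀) ^ 2 - s ^ 2) * hcs + s ^ 2 * ha1
  have hW : Wform X s t = -a₀ ^ 2 := by
    simp only [Wform, hE, hF, hG]; ring
  have hdss : det3 (pd1 X s t) (pd2 X s t) (pd1 (pd1 X) s t) = 0 := by
    simp only [hpd11 s t]
    simp only [det3, hpd1, hpd2]
    ring
  have hdst : det3 (pd1 X s t) (pd2 X s t) (pd2 (pd1 X) s t) = 0 := by
    simp only [hpd12 s t]
    simp only [det3, hpd1, hpd2]
    linear_combination (h * (Real.cosh t ^ 2 - Real.sinh t ^ 2)) * ha1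
  have hdtt : det3 (pd1 X s t) (pd2 X s t) (pd2 (pd2 X) s t) = -h * a₀ := by
    simp only [hpd22 s t]
    simp only [det3, hpd1, hpd2]
    linear_combination (-h * a₀) * hcs
  have hH1 : H1 X s t = 0 := by
    simp only [H1, hdss, hdst, hdtt, hE]; ring
  have hK1 : K1 X s t = 0 := by
    simp only [K1, hdss, hdst, hdtt]; ring
  refine ⟨hW, ?_, ?_, ?_⟩
  · rw [hW]
    exact neg_lt_zero.mpr ((sq_nonneg a₀).lt_of_ne (Ne.symm (pow_ne_zero 2 ha0)))
  · simp [Hmean, hH1]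
  · simp [Kcurv, hK1]
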